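/- The braid b¹⁷ = σ_2^{−4} σ_1^{−5} σ_2^{−1} σ_1 σ_2^{−4} σ_1^{−1} σ_2 Δ_3^5 in the braid group B_3 is not quasipositive. -/

import Mathlib

open FreeGroup in
/-- The braid relations on `n` generators. -/
def braidRels (n : ℕ) : Set (FreeGroup (Fin n)) :=
  {r | (∃ i j : Fin n, (i : ℕ) + 1 = (j : ℕ) ∧
          r = of i * of j * of i * (of j * of i * of j)⁻¹) ∨
       (∃ i j : Fin n, (i : ℕ) + 2 ≤ (j : ℕ) ∧
          r = of i * of j * (of j * of i)⁻¹)}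

/-- The braid group `B_{n+1}`, presented with `n` generators `σ_1, …, σ_n`
(so `Braid (m - 1)` is the braid group on `m` strands). -/
def Braid (n : ℕ) : Type := PresentedGroup (braidRels n)

instance (n : ℕ) : Group (Braid n) :=
  inferInstanceAs (Group (PresentedGroup (braidRels n)))

/-- The Artin generator `σ_{i+1}` of the braid group (indices start at `0`,
so `σ 0` is the generator usually written `σ_1`). -/
def σ {n : ℕ} (i : Fin n) : Braid n := PresentedGroup.of i

/-- A braid is quasipositive if it can be written as a (possibly empty) product
of conjugates `w σ_1 w⁻¹` of the first Artin generator. -/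
def Quasipositive {n : ℕ} [NeZero n] (b : Braid n) : Prop :=
  ∃ l : List (Braid n), b = (l.map fun w => w * σ 0 * w⁻¹).prod


/-- `σ_1` in the braid group `B_3`. -/
def σ₁ : Braid 2 := σ 0
/-- `σ_2` in the braid group `B_3`. -/
def σ₂ : Braid 2 := σ 1
/-- The Garside element `Δ_3 = σ_1 σ_2 σ_1` of `B_3`. -/
def Δ₃ : Braid 2 := σ₁ * σ₂ * σ₁

open Matrix MatrixGroups

namespace B17Aux

def S1 : SL(2, ℤ) := ⟨!![1, 1; 0, 1], by norm_num [Matrix.det_fin_two_of]⟩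
def S2 : SL(2, ℤ) := ⟨!![1, 0; -1, 1], by norm_num [Matrix.det_fin_two_of]⟩
def S1i : SL(2, ℤ) := ⟨!![1, -1; 0, 1], by norm_num [Matrix.det_fin_two_of]⟩
def S2i : SL(2, ℤ) := ⟨!![1, 0; 1, 1], by norm_num [Matrix.det_fin_two_of]⟩

def fρ : Fin 2 → SL(2, ℤ) := ![S1, S2]

lemma braid_rel_holds : ∀ r ∈ braidRels 2, FreeGroup.lift fρ r = 1 := by
  rintro r (⟨i, j, hij, rfl⟩ | ⟨i, j, hij, rfl⟩)
  · have hi : i = 0 := by omega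
    have hj : j = 1 := by omega
    subst hi; subst hj
    simp only [_root_.map_mul, _root_.map_inv, FreeGroup.lift_apply_of]
    rw [mul_inv_eq_one]
    ext k l
    simp only [Matrix.SpecialLinearGroup.coe_mul]
    fin_cases k <;> fin_cases l <;>
      simp [fρ, S1, S2, Matrix.mul_apply, Fin.sum_univ_two]
  · exfalso; omega

/-- The Burau-type representation `ρ : Braid 2 →* SL(2,ℤ)`. -/
def ρ : Braid 2 →* SL(2, ℤ) := PresentedGroup.toGroup braid_rel_holds

lemma ρ_σ₁ : ρ σ₁ = S1 := PresentedGroup.toGroup.of braid_rel_holds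
lemma ρ_σ₂ : ρ σ₂ = S2 := PresentedGroup.toGroup.of braid_rel_holds

lemma S1_inv : S1⁻¹ = S1i := by
  apply inv_eq_of_mul_eq_one_right
  ext k l
  simp only [Matrix.SpecialLinearGroup.coe_mul]
  fin_cases k <;> fin_cases l <;>
    simp [S1, S1i, Matrix.mul_apply, Fin.sum_univ_two]

lemma S2_inv : S2⁻¹ = S2i := by
  apply inv_eq_of_mul_eq_one_right
  ext k l
  simp only [Matrix.SpecialLinearGroup.coe_mul]
  fin_cases k <;> fin_cases l <;>
    simp [S2, S2i, Matrix.mul_apply, Fin.sum_univ_two]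

/-- The exponent-sum homomorphism. -/
def ε : Braid 2 →* Multiplicative ℤ :=
  PresentedGroup.toGroup (f := fun _ => Multiplicative.ofAdd (1 : ℤ)) (by
    rintro r (⟨i, j, _, rfl⟩ | ⟨i, j, _, rfl⟩) <;>
      simp only [_root_.map_mul, _root_.map_inv, FreeGroup.lift_apply_of] <;> group)

lemma ε_σ (i : Fin 2) : ε (σ i) = Multiplicative.ofAdd (1 : ℤ) :=
  PresentedGroup.toGroup.of _

lemma trace_conj (a b : SL(2, ℤ)) :
    Matrix.trace ((a * b * a⁻¹ : SL(2, ℤ)) : Matrix (Fin 2) (Fin 2) ℤ) =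
      Matrix.trace ((b : SL(2, ℤ)) : Matrix (Fin 2) (Fin 2) ℤ) := by
  rw [show a * b * a⁻¹ = a * (b * a⁻¹) by group, Matrix.SpecialLinearGroup.coe_mul,
    Matrix.trace_mul_comm, ← Matrix.SpecialLinearGroup.coe_mul,
    show b * a⁻¹ * a = b by group]

lemma trace_helper (A B C D : ℤ) (h : A * D - B * C = 1) :
    Matrix.trace (!![(1:ℤ), 1; 0, 1] * !![A, B; C, D] * !![(1:ℤ), 1; 0, 1] *
      !![D, -B; -C, A]) = 2 - C ^ 2 := by
  simp only [Matrix.mul_fin_two, Matrix.trace_fin_two_of]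
  linear_combination 2 * h

lemma trace_S1_conj (g : SL(2, ℤ)) :
    ∃ c : ℤ, Matrix.trace ((S1 * g * S1 * g⁻¹ : SL(2, ℤ)) : Matrix (Fin 2) (Fin 2) ℤ)
      = 2 - c ^ 2 := by
  set M : Matrix (Fin 2) (Fin 2) ℤ := (g : Matrix (Fin 2) (Fin 2) ℤ) with hM
  have hdet : M 0 0 * M 1 1 - M 0 1 * M 1 0 = 1 := by
    rw [← Matrix.det_fin_two]; exact g.2
  refine ⟨M 1 0, ?_⟩
  have h1 : ((g⁻¹ : SL(2, ℤ)) : Matrix (Fin 2) (Fin 2) ℤ) =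
      !![M 1 1, -M 0 1; -M 1 0, M 0 0] := by
    rw [Matrix.SpecialLinearGroup.coe_inv, Matrix.adjugate_fin_two, ← hM]
  have h2 : ((S1 * g * S1 * g⁻¹ : SL(2, ℤ)) : Matrix (Fin 2) (Fin 2) ℤ) =
      !![(1:ℤ), 1; 0, 1] * !![M 0 0, M 0 1; M 1 0, M 1 1] * !![(1:ℤ), 1; 0, 1] *
        !![M 1 1, -M 0 1; -M 1 0, M 0 0] := by
    simp only [Matrix.SpecialLinearGroup.coe_mul, h1]
    rw [← Matrix.eta_fin_two M, ← hM]
    rfl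
  rw [h2]
  exact trace_helper _ _ _ _ hdet

/-- Trace of a product of two conjugates of `S1`. -/
lemma trace_two_conj (x y : SL(2, ℤ)) :
    ∃ c : ℤ, Matrix.trace ((x * S1 * x⁻¹ * (y * S1 * y⁻¹) : SL(2, ℤ)) :
      Matrix (Fin 2) (Fin 2) ℤ) = 2 - c ^ 2 := by
  obtain ⟨c, hc⟩ := trace_S1_conj (x⁻¹ * y)
  refine ⟨c, ?_⟩
  rw [show x * S1 * x⁻¹ * (y * S1 * y⁻¹) =
      x * (S1 * (x⁻¹ * y) * S1 * (x⁻¹ * y)⁻¹) * x⁻¹ by group]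
  rw [trace_conj]
  exact hc

end B17Aux

open B17Aux in
theorem b17_not_quasipositive :
    ¬ Quasipositive
      ((σ₂ ^ 4)⁻¹ * (σ₁ ^ 5)⁻¹ * σ₂⁻¹ * σ₁ * (σ₂ ^ 4)⁻¹ * σ₁⁻¹ * σ₂ * Δ₃ ^ 5) := by
  rintro ⟨l, hl⟩
  -- Step 1: exponent sum forces `l.length = 2`.
  have hlen : l.length = 2 := by
    have h1 := congrArg ε hl
    have hε : ∀ x ∈ l.map fun w => w * σ 0 * w⁻¹,
        ε x = Multiplicative.ofAdd (1 : ℤ) := by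
      rintro x hx
      rw [List.mem_map] at hx
      obtain ⟨w, -, rfl⟩ := hx
      simp [_root_.map_mul, _root_.map_inv, ε_σ]
    rw [map_list_prod, List.map_map] at h1
    have h2 : (l.map ((ε : Braid 2 →* Multiplicative ℤ) ∘
        fun w => w * σ 0 * w⁻¹)).prod = Multiplicative.ofAdd (l.length : ℤ) := by
      rw [List.prod_eq_pow_card _ (Multiplicative.ofAdd (1 : ℤ)) (by
        intro x hx
        rw [List.mem_map] at hx
        obtain ⟨w, -, rfl⟩ := hx
        simp [_root_.map_mul, _root_.map_inv, ε_σ])]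
      simp [← ofAdd_nsmul]
    rw [h2] at h1
    have h3 : ε ((σ₂ ^ 4)⁻¹ * (σ₁ ^ 5)⁻¹ * σ₂⁻¹ * σ₁ * (σ₂ ^ 4)⁻¹ * σ₁⁻¹ * σ₂ * Δ₃ ^ 5)
        = Multiplicative.ofAdd (2 : ℤ) := by
      simp only [σ₁, σ₂, Δ₃, _root_.map_mul, _root_.map_inv, _root_.map_pow, ε_σ]
      rw [← ofAdd_add]
      norm_num [← ofAdd_nsmul, ← ofAdd_add, ← ofAdd_neg]
    rw [h3] at h1
    have : (2 : ℤ) = (l.length : ℤ) := by exact_mod_cast Multiplicative.ofAdd.injective h1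
    omega
  obtain ⟨w1, w2, rfl⟩ := List.length_eq_two.mp hlen
  -- Step 2: apply ρ and take traces.
  have h4 := congrArg ρ hl
  simp only [List.map_cons, List.map_nil, List.prod_cons, List.prod_nil, mul_one,
    _root_.map_mul, _root_.map_inv] at h4
  have hσ0 : ρ (σ 0) = S1 := ρ_σ₁
  rw [hσ0] at h4
  obtain ⟨c, hc⟩ := trace_two_conj (ρ w1) (ρ w2)
  rw [← h4] at hc
  -- Step 3: compute the trace of ρ(b).
  have h5 : (ρ (σ₂ ^ 4))⁻¹ * (ρ (σ₁ ^ 5))⁻¹ * (ρ σ₂)⁻¹ * ρ σ₁ * (ρ (σ₂ ^ 4))⁻¹ *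
        (ρ σ₁)⁻¹ * ρ σ₂ * ρ (Δ₃ ^ 5)
      = S2i ^ 4 * S1i ^ 5 * S2i * S1 * S2i ^ 4 * S1i * S2 * (S1 * S2 * S1) ^ 5 := by
    simp only [Δ₃, _root_.map_mul, _root_.map_pow, ρ_σ₁, ρ_σ₂, ← inv_pow,
      S1_inv, S2_inv]
  rw [h5] at hc
  have h6 : Matrix.trace ((S2i ^ 4 * S1i ^ 5 * S2i * S1 * S2i ^ 4 * S1i * S2 *
      (S1 * S2 * S1) ^ 5 : SL(2, ℤ)) : Matrix (Fin 2) (Fin 2) ℤ) = -299 := by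
    show Matrix.trace (((S2i ^ 4 * S1i ^ 5 * S2i * S1 * S2i ^ 4 * S1i * S2 *
      (S1 * S2 * S1) ^ 5 : SL(2, ℤ)) : Matrix (Fin 2) (Fin 2) ℤ)) = -299
    simp only [Matrix.SpecialLinearGroup.coe_mul, Matrix.SpecialLinearGroup.coe_pow]
    norm_num [S1, S2, S1i, S2i, pow_succ, Matrix.mul_fin_two, Matrix.trace_fin_two_of]
  rw [h6] at hc
  -- Step 4: 301 is not a perfect square.
  have hc2 : c ^ 2 = 301 := by omega
  have hb1 : c ≤ 18 := by nlinarith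
  have hb2 : -18 ≤ c := by nlinarith
  interval_cases c <;> omega
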